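/- Let C ∈ B(H) be accretive (i.e., its self-adjoint part C_H = (C + C*)/2 is nonnegative) and coercive in the sense that C_H ≥ κI for some κ > 0. Then there exist constants M > 0 such that for all unit vectors x and all t ∈ [0,1], ‖e^{-Ct}x‖² ≤ 1 − 2κt + M t², and in particular ‖e^{-Ct}‖ < 1 for all sufficiently small t > 0. -/

import Mathlib

open ContinuousLinearMap
open scoped InnerProductSpace
open scoped Nat

lemma exp_remainder_bound {𝔸 : Type*} [NormedRing 𝔸] [NormedAlgebra ℂ 𝔸] [CompleteSpace 𝔸]
    (A : 𝔸) : ‖NormedSpace.exp A - 1 - A‖ ≤ ‖A‖ ^ 2 * Real.exp ‖A‖ := by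
  have h : HasSum (fun n : ℕ => ((n ! : ℂ))⁻¹ • A ^ n) (NormedSpace.exp A) :=
    NormedSpace.exp_series_hasSum_exp' A
  have h2 : HasSum (fun n : ℕ => ((((n + 2) ! : ℂ))⁻¹ • A ^ (n + 2)))
      (NormedSpace.exp A - ∑ i ∈ Finset.range 2, ((i ! : ℂ))⁻¹ • A ^ i) :=
    (hasSum_nat_add_iff' 2).mpr h
  have hsum : ∑ i ∈ Finset.range 2, ((i ! : ℂ))⁻¹ • A ^ i = 1 + A := by
    simp [Finset.sum_range_succ]
  rw [hsum] at h2
  have key : NormedSpace.exp A - 1 - A = ∑' n : ℕ, (((n + 2) ! : ℂ))⁻¹ • A ^ (n + 2) := by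
    rw [h2.tsum_eq, sub_sub]
  rw [key]
  have hexp : HasSum (fun n : ℕ => ‖A‖ ^ n / n !) (Real.exp ‖A‖) := by
    rw [Real.exp_eq_exp_ℝ, NormedSpace.exp_eq_tsum_div]
    exact (NormedSpace.expSeries_div_summable ‖A‖).hasSum
  have hb : ∀ n : ℕ, ‖(((n + 2) ! : ℂ))⁻¹ • A ^ (n + 2)‖ ≤ ‖A‖ ^ 2 * (‖A‖ ^ n / n !) := by
    intro n
    rw [norm_smul]
    have h1 : ‖((((n + 2) ! : ℂ)))⁻¹‖ = ((n + 2)! : ℝ)⁻¹ := by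
      rw [norm_inv, Complex.norm_natCast]
    rw [h1]
    calc ((n + 2)! : ℝ)⁻¹ * ‖A ^ (n + 2)‖ ≤ ((n + 2)! : ℝ)⁻¹ * ‖A‖ ^ (n + 2) := by
          gcongr; exact norm_pow_le' A (by omega)
      _ ≤ (n ! : ℝ)⁻¹ * ‖A‖ ^ (n + 2) := by
          have hle : ((n + 2)! : ℝ)⁻¹ ≤ (n ! : ℝ)⁻¹ := by
            apply inv_anti₀
            · positivity
            · exact_mod_cast Nat.factorial_le (by omega)
          exact mul_le_mul_of_nonneg_right hle (by positivity)
      _ = ‖A‖ ^ 2 * (‖A‖ ^ n / n !) := by ring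
  have hns : Summable (fun n : ℕ => ‖(((n + 2) ! : ℂ))⁻¹ • A ^ (n + 2)‖) :=
    Summable.of_nonneg_of_le (fun n => norm_nonneg _) hb (hexp.summable.mul_left _)
  calc ‖∑' n : ℕ, (((n + 2) ! : ℂ))⁻¹ • A ^ (n + 2)‖
      ≤ ∑' n : ℕ, ‖(((n + 2) ! : ℂ))⁻¹ • A ^ (n + 2)‖ := norm_tsum_le_tsum_norm hns
    _ ≤ ∑' n : ℕ, ‖A‖ ^ 2 * (‖A‖ ^ n / n !) :=
        Summable.tsum_le_tsum hb hns (hexp.summable.mul_left _)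
    _ = ‖A‖ ^ 2 * Real.exp ‖A‖ := by rw [tsum_mul_left, hexp.tsum_eq]

set_option maxHeartbeats 2000000 in
theorem coercive_short_time_decay
    {H : Type*} [NormedAddCommGroup H] [InnerProductSpace ℂ H]
    [CompleteSpace H] [TopologicalSpace.SeparableSpace H]
    (C : H →L[ℂ] H) (κ : ℝ) (hκ : 0 < κ)
    (hacc : ∀ x : H, 0 ≤ (⟪C x, x⟫_ℂ).re)
    (hcoer : ∀ x : H, κ * ‖x‖ ^ 2 ≤
      (⟪(((1 : ℂ) / 2) • (C + ContinuousLinearMap.adjoint C)) x, x⟫_ℂ).re) :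
    (∃ M : ℝ, 0 < M ∧ ∀ x : H, ‖x‖ = 1 → ∀ t ∈ Set.Icc (0 : ℝ) 1,
      ‖(NormedSpace.exp (-((t : ℂ) • C))) x‖ ^ 2 ≤ 1 - 2 * κ * t + M * t ^ 2) ∧
    ∃ t₀ : ℝ, 0 < t₀ ∧ ∀ t ∈ Set.Ioo (0 : ℝ) t₀,
      ‖NormedSpace.exp (-((t : ℂ) • C))‖ < 1 := by
  set K : ℝ := ‖C‖ ^ 2 * Real.exp ‖C‖ with hKdef
  have hK0 : 0 ≤ K := by positivity
  set M : ℝ := ‖C‖ ^ 2 + 2 * (1 + ‖C‖) * K + K ^ 2 + 1 with hMdef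
  have hM0 : 0 < M := by positivity
  -- coercivity gives κ ≤ re ⟪C x, x⟫ for unit x
  have hcoer' : ∀ x : H, ‖x‖ = 1 → κ ≤ (⟪C x, x⟫_ℂ).re := by
    intro x hx
    have h := hcoer x
    rw [hx] at h
    have heq : (⟪(((1 : ℂ) / 2) • (C + ContinuousLinearMap.adjoint C)) x, x⟫_ℂ).re
        = (⟪C x, x⟫_ℂ).re := by
      have h1 : (⟪(((1 : ℂ) / 2) • (C + ContinuousLinearMap.adjoint C)) x, x⟫_ℂ)
          = (starRingEnd ℂ) ((1 : ℂ) / 2) * (⟪C x, x⟫_ℂ + ⟪(ContinuousLinearMap.adjoint C) x, x⟫_ℂ) := by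
        rw [ContinuousLinearMap.smul_apply, inner_smul_left, ContinuousLinearMap.add_apply,
          inner_add_left]
      have h2 : ⟪(ContinuousLinearMap.adjoint C) x, x⟫_ℂ = (starRingEnd ℂ) ⟪C x, x⟫_ℂ := by
        rw [ContinuousLinearMap.adjoint_inner_left, ← inner_conj_symm]
      rw [h1, h2, Complex.add_conj]
      simp
    rw [heq] at h
    simpa using h
  have main : ∀ x : H, ‖x‖ = 1 → ∀ t ∈ Set.Icc (0 : ℝ) 1,
      ‖(NormedSpace.exp (-((t : ℂ) • C))) x‖ ^ 2 ≤ 1 - 2 * κ * t + M * t ^ 2 := by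
    intro x hx t ht
    obtain ⟨ht0, ht1⟩ := ht
    set A : H →L[ℂ] H := -((t : ℂ) • C) with hAdef
    have hAn : ‖A‖ = t * ‖C‖ := by
      rw [hAdef, norm_neg, norm_smul, Complex.norm_real, Real.norm_eq_abs, abs_of_nonneg ht0]
    set R : H →L[ℂ] H := NormedSpace.exp A - 1 - A with hRdef
    have hRn : ‖R‖ ≤ t ^ 2 * K := by
      have h := exp_remainder_bound A
      rw [hAn] at h
      calc ‖R‖ ≤ (t * ‖C‖) ^ 2 * Real.exp (t * ‖C‖) := h
        _ ≤ (t * ‖C‖) ^ 2 * Real.exp ‖C‖ := by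
            gcongr
            exact mul_le_of_le_one_left (norm_nonneg _) ht1
        _ = t ^ 2 * K := by rw [hKdef]; ring
    set y : H := x - (t : ℂ) • C x with hydef
    have hsplit : (NormedSpace.exp A) x = y + R x := by
      have : NormedSpace.exp A = R + 1 + A := by rw [hRdef]; abel
      rw [this]
      simp [hydef, hAdef]
      abel
    have hip : κ ≤ (⟪C x, x⟫_ℂ).re := hcoer' x hx
    have hy2 : ‖y‖ ^ 2 = 1 - 2 * (t * (⟪C x, x⟫_ℂ).re) + t ^ 2 * ‖C x‖ ^ 2 := by
      have h := @norm_sub_sq ℂ _ _ _ _ x ((t : ℂ) • C x)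
      rw [hydef]
      rw [h, hx, inner_smul_right]
      have : (RCLike.re ((t : ℂ) * ⟪x, C x⟫_ℂ) : ℝ) = t * (⟪C x, x⟫_ℂ).re := by
        rw [← inner_conj_symm (𝕜 := ℂ) (C x) x]
        rw [RCLike.re_to_complex, Complex.re_ofReal_mul, Complex.conj_re]
      rw [this, norm_smul]
      simp [Complex.norm_real, Real.norm_eq_abs, abs_of_nonneg ht0]
      ring
    have hCx : ‖C x‖ ≤ ‖C‖ := by
      calc ‖C x‖ ≤ ‖C‖ * ‖x‖ := C.le_opNorm x
        _ = ‖C‖ := by rw [hx, mul_one]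
    have hy2b : ‖y‖ ^ 2 ≤ 1 - 2 * κ * t + t ^ 2 * ‖C‖ ^ 2 := by
      rw [hy2]
      have h1 : 2 * (t * κ) ≤ 2 * (t * (⟪C x, x⟫_ℂ).re) := by nlinarith
      have hCx2 : ‖C x‖ ^ 2 ≤ ‖C‖ ^ 2 := pow_le_pow_left₀ (norm_nonneg _) hCx 2
      nlinarith [mul_le_mul_of_nonneg_left hCx2 (sq_nonneg t)]
    have hyb : ‖y‖ ≤ 1 + ‖C‖ := by
      calc ‖y‖ ≤ ‖x‖ + ‖(t : ℂ) • C x‖ := norm_sub_le _ _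
        _ = 1 + t * ‖C x‖ := by
            rw [hx, norm_smul, Complex.norm_real, Real.norm_eq_abs, abs_of_nonneg ht0]
        _ ≤ 1 + ‖C‖ := by nlinarith [norm_nonneg (C x)]
    have hRxb : ‖R x‖ ≤ t ^ 2 * K := by
      calc ‖R x‖ ≤ ‖R‖ * ‖x‖ := R.le_opNorm x
        _ = ‖R‖ := by rw [hx, mul_one]
        _ ≤ t ^ 2 * K := hRn
    have htri : ‖(NormedSpace.exp A) x‖ ≤ ‖y‖ + ‖R x‖ := by
      rw [hsplit]; exact norm_add_le _ _
    have hy0 : (0 : ℝ) ≤ ‖y‖ := norm_nonneg _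
    have hR0 : (0 : ℝ) ≤ ‖R x‖ := norm_nonneg _
    have hsq : ‖(NormedSpace.exp A) x‖ ^ 2 ≤ (‖y‖ + ‖R x‖) ^ 2 := by
      have := norm_nonneg ((NormedSpace.exp A) x)
      nlinarith
    have hC0 : (0 : ℝ) ≤ ‖C‖ := norm_nonneg _
    have e2 : ‖y‖ * ‖R x‖ ≤ (1 + ‖C‖) * (t ^ 2 * K) :=
      mul_le_mul hyb hRxb hR0 (by linarith)
    have ht2le : t ^ 2 ≤ 1 := pow_le_one₀ ht0 ht1
    have e3 : ‖R x‖ ^ 2 ≤ t ^ 2 * K ^ 2 := by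
      have h4 : ‖R x‖ ^ 2 ≤ (t ^ 2 * K) ^ 2 := pow_le_pow_left₀ hR0 hRxb 2
      have h5 : (t ^ 2 * K) ^ 2 ≤ t ^ 2 * K ^ 2 := by
        calc (t ^ 2 * K) ^ 2 = t ^ 2 * K ^ 2 * t ^ 2 := by ring
          _ ≤ t ^ 2 * K ^ 2 * 1 := by
              exact mul_le_mul_of_nonneg_left ht2le (by positivity)
          _ = t ^ 2 * K ^ 2 := mul_one _
      linarith
    have hexpand : (‖y‖ + ‖R x‖) ^ 2 = ‖y‖ ^ 2 + 2 * (‖y‖ * ‖R x‖) + ‖R x‖ ^ 2 := by ring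
    calc ‖(NormedSpace.exp A) x‖ ^ 2 ≤ (‖y‖ + ‖R x‖) ^ 2 := hsq
      _ = ‖y‖ ^ 2 + 2 * (‖y‖ * ‖R x‖) + ‖R x‖ ^ 2 := hexpand
      _ ≤ (1 - 2 * κ * t + t ^ 2 * ‖C‖ ^ 2) + 2 * ((1 + ‖C‖) * (t ^ 2 * K)) + t ^ 2 * K ^ 2 := by
          linarith
      _ ≤ 1 - 2 * κ * t + M * t ^ 2 := by
          rw [hMdef]; nlinarith [sq_nonneg t]
  refine ⟨⟨M, hM0, main⟩, ?_⟩
  refine ⟨min (2 * κ / M) (min 1 (1 / (2 * κ))), by positivity, ?_⟩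
  intro t ht
  obtain ⟨ht0, htu⟩ := ht
  have ht1 : t < 1 := lt_of_lt_of_le htu (le_trans (min_le_right _ _) (min_le_left _ _))
  have ht2 : t < 2 * κ / M := lt_of_lt_of_le htu (min_le_left _ _)
  have ht3 : t < 1 / (2 * κ) := lt_of_lt_of_le htu (le_trans (min_le_right _ _) (min_le_right _ _))
  set c : ℝ := 1 - 2 * κ * t + M * t ^ 2 with hcdef
  have hc1 : c < 1 := by
    rw [lt_div_iff₀ hM0] at ht2
    nlinarith [mul_lt_mul_of_pos_right ht2 ht0]
  have hc0 : 0 ≤ c := by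
    have h2κt : 2 * κ * t < 1 := by
      rw [lt_div_iff₀ (by positivity)] at ht3
      nlinarith
    nlinarith [sq_nonneg t, mul_pos hM0 (mul_pos ht0 ht0)]
  have hTle : ∀ x : H, ‖(NormedSpace.exp (-((t : ℂ) • C))) x‖ ≤ Real.sqrt c * ‖x‖ := by
    intro x
    rcases eq_or_ne x 0 with hx0 | hx0
    · simp [hx0]
    · set u : H := ‖x‖⁻¹ • x with hudef
      have hxn : (0 : ℝ) < ‖x‖ := norm_pos_iff.mpr hx0
      have hu : ‖u‖ = 1 := by
        rw [hudef, norm_smul, norm_inv, norm_norm, inv_mul_cancel₀ (ne_of_gt hxn)]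
      have hmain := main u hu t ⟨le_of_lt ht0, le_of_lt ht1⟩
      have hTu : ‖(NormedSpace.exp (-((t : ℂ) • C))) u‖ ≤ Real.sqrt c := by
        have h5 := Real.sqrt_le_sqrt hmain
        rwa [Real.sqrt_sq (norm_nonneg _)] at h5
      have hxu : x = ‖x‖ • u := by
        rw [hudef, smul_smul, mul_inv_cancel₀ (ne_of_gt hxn), one_smul]
      calc ‖(NormedSpace.exp (-((t : ℂ) • C))) x‖
          = ‖x‖ * ‖(NormedSpace.exp (-((t : ℂ) • C))) u‖ := by
            conv_lhs => rw [hxu]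
            rw [ContinuousLinearMap.map_smul_of_tower, norm_smul, norm_norm]
        _ ≤ ‖x‖ * Real.sqrt c := by gcongr
        _ = Real.sqrt c * ‖x‖ := mul_comm _ _
  have hle : ‖NormedSpace.exp (-((t : ℂ) • C))‖ ≤ Real.sqrt c :=
    ContinuousLinearMap.opNorm_le_bound _ (Real.sqrt_nonneg c) hTle
  calc ‖NormedSpace.exp (-((t : ℂ) • C))‖ ≤ Real.sqrt c := hle
    _ < 1 := by
      rw [show (1 : ℝ) = Real.sqrt 1 from (Real.sqrt_one).symm]
      exact Real.sqrt_lt_sqrt hc0 hc1
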